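/- For every θ ∈ (0,1) and every real μ ≥ 1 there exists a constant C > 0, independent of n, such that for every integer n ≥ 1 and every vector u ∈ ℝⁿ with nonnegative entries, N_{θ,n}((𝔏_n u)^μ) ≤ C · N_{θ,n}(𝔏_n(u^μ)), where (𝔏_n u)^μ denotes the pointwise μ-th power of the function 𝔏_n u and u^μ ∈ ℝⁿ denotes the vector with entries u_i^μ. (The Sobolev–Slobodeckii seminorm of the μ-th power of the piecewise-linear interpolant is dominated by that of the interpolant of the pointwise powers.) -/

import Mathlib

open MeasureTheory

/-- The continuous piecewise-linear interpolant `𝔏_n u : [0,1] → ℝ` of a vector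
`u` (entries `u 1, …, u n`, with the convention `u₀ = u_{n+1} = 0`): it is affine on
each cell `Δ_i = [i h_n, (i+1) h_n]`, `h_n = 1/(n+1)`, and takes value `u i` at `i h_n`. -/
noncomputable def linInterp (n : ℕ) (u : ℕ → ℝ) : ℝ → ℝ := fun x =>
  ∑ i ∈ Finset.Icc 1 n, u i * max 0 (1 - |((n : ℝ) + 1) * x - (i : ℝ)|)

/-- The squared truncated Gagliardo seminorm
`N_{θ,n}(f)² = ∑_{|i-j|≤1, 0≤i,j≤n} ∬_{Δ_i×Δ_j} |f(x)-f(y)|²/|x-y|^{1+2θ} dx dy`,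
with cells `Δ_i = [i h_n, (i+1) h_n]`, `h_n = 1/(n+1)`. -/
noncomputable def gagliardoSq (θ : ℝ) (n : ℕ) (f : ℝ → ℝ) : ℝ :=
  ∑ i ∈ Finset.range (n + 1), ∑ j ∈ Finset.range (n + 1),
    if i ≤ j + 1 ∧ j ≤ i + 1 then
      ∫ x in Set.Icc ((i : ℝ) / ((n : ℝ) + 1)) (((i : ℝ) + 1) / ((n : ℝ) + 1)),
        ∫ y in Set.Icc ((j : ℝ) / ((n : ℝ) + 1)) (((j : ℝ) + 1) / ((n : ℝ) + 1)),
          |f x - f y| ^ 2 / |x - y| ^ (1 + 2 * θ)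
    else 0

/-- The truncated Gagliardo seminorm `N_{θ,n}(f)`. -/
noncomputable def gagliardo (θ : ℝ) (n : ℕ) (f : ℝ → ℝ) : ℝ :=
  Real.sqrt (gagliardoSq θ n f)

lemma aux_pow_diff_le {μ c d : ℝ} (hμ : 1 ≤ μ) (hc : 0 ≤ c) (hcd : c ≤ d) :
    d ^ μ - c ^ μ ≤ μ * d ^ (μ - 1) * (d - c) := by
  have hd : 0 ≤ d := hc.trans hcd
  rcases eq_or_lt_of_le hd with hd0 | hd0
  · have hc0 : c = 0 := le_antisymm (hcd.trans hd0.symm.le) hc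
    simp [← hd0, hc0]
  · have hr : -1 ≤ c / d - 1 := by
      have : 0 ≤ c / d := div_nonneg hc hd
      linarith
    have hB := one_add_mul_self_le_rpow_one_add hr hμ
    rw [add_sub_cancel] at hB
    rw [Real.div_rpow hc hd] at hB
    have hdμ : 0 < d ^ μ := Real.rpow_pos_of_pos hd0 μ
    have h1 : (1 + μ * (c / d - 1)) * d ^ μ ≤ c ^ μ := by
      exact (le_div_iff₀ hdμ).1 hB
    have h2 : d ^ μ = d ^ (μ - 1) * d := by
      rw [← Real.rpow_add_one hd0.ne' (μ - 1), sub_add_cancel]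
    have h3 : d ^ μ * (c / d) = d ^ (μ - 1) * c := by
      rw [h2]; field_simp
    nlinarith [hdμ]

lemma aux_pow_diff_ge {μ c d : ℝ} (hμ : 1 ≤ μ) (hc : 0 ≤ c) (hcd : c ≤ d) :
    d ^ (μ - 1) * (d - c) ≤ d ^ μ - c ^ μ := by
  have hd : 0 ≤ d := hc.trans hcd
  have h1 : c ^ μ ≤ c * d ^ (μ - 1) := by
    rcases eq_or_lt_of_le hc with hc0 | hc0
    · rw [← hc0, Real.zero_rpow (by linarith), zero_mul]
    · have : c ^ μ = c ^ (μ - 1) * c := by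
        rw [← Real.rpow_add_one hc0.ne' (μ - 1), sub_add_cancel]
      rw [this, mul_comm]
      exact mul_le_mul_of_nonneg_left
        (Real.rpow_le_rpow hc hcd (by linarith)) hc
  have h2 : d ^ μ = d ^ (μ - 1) * d := by
    rcases eq_or_lt_of_le hd with hd0 | hd0
    · rw [← hd0]
      rw [Real.zero_rpow (by linarith : μ ≠ 0)]; ring
    · rw [← Real.rpow_add_one hd0.ne' (μ - 1), sub_add_cancel]
  nlinarith

lemma aux_abs_pow_sub_le' {μ M c d : ℝ} (hμ : 1 ≤ μ) (hc : 0 ≤ c) (hcd : c ≤ d) (hdM : d ≤ M) :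
    |d ^ μ - c ^ μ| ≤ μ * M ^ (μ - 1) * |d - c| := by
  have hd : 0 ≤ d := hc.trans hcd
  have hmono : c ^ μ ≤ d ^ μ := Real.rpow_le_rpow hc hcd (by linarith)
  rw [abs_of_nonneg (by linarith), abs_of_nonneg (by linarith)]
  calc d ^ μ - c ^ μ ≤ μ * d ^ (μ - 1) * (d - c) := aux_pow_diff_le hμ hc hcd
    _ ≤ μ * M ^ (μ - 1) * (d - c) := by
        have h5 := Real.rpow_le_rpow hd hdM (by linarith : (0:ℝ) ≤ μ - 1)
        have h4 : 0 ≤ μ * (d - c) := by nlinarith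
        nlinarith [mul_le_mul_of_nonneg_left h5 h4]
lemma aux_abs_pow_sub_le {μ M c d : ℝ} (hμ : 1 ≤ μ) (hc : 0 ≤ c) (hd : 0 ≤ d)
    (hcM : c ≤ M) (hdM : d ≤ M) :
    |d ^ μ - c ^ μ| ≤ μ * M ^ (μ - 1) * |d - c| := by
  rcases le_total c d with h | h
  · exact aux_abs_pow_sub_le' hμ hc h hdM
  · rw [abs_sub_comm, abs_sub_comm d c]
    exact aux_abs_pow_sub_le' hμ hd h hcM

lemma aux_max_pow_ge' {μ c d : ℝ} (hμ : 1 ≤ μ) (hc : 0 ≤ c) (hcd : c ≤ d) :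
    (max c d) ^ (μ - 1) * |d - c| ≤ |d ^ μ - c ^ μ| := by
  have hmono : c ^ μ ≤ d ^ μ := Real.rpow_le_rpow hc hcd (by linarith)
  rw [max_eq_right hcd, abs_of_nonneg (by linarith), abs_of_nonneg (by linarith)]
  exact aux_pow_diff_ge hμ hc hcd

lemma aux_max_pow_ge {μ c d : ℝ} (hμ : 1 ≤ μ) (hc : 0 ≤ c) (hd : 0 ≤ d) :
    (max c d) ^ (μ - 1) * |d - c| ≤ |d ^ μ - c ^ μ| := by
  rcases le_total c d with h | h
  · exact aux_max_pow_ge' hμ hc h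
  · rw [max_comm, abs_sub_comm, abs_sub_comm (d ^ μ)]
    exact aux_max_pow_ge' hμ hd h



noncomputable def ev (n : ℕ) (u : ℕ → ℝ) (k : ℕ) : ℝ :=
  if k ∈ Finset.Icc 1 n then u k else 0

lemma ev_nonneg {n : ℕ} {u : ℕ → ℝ} (hu : ∀ i ∈ Finset.Icc 1 n, 0 ≤ u i) (k : ℕ) :
    0 ≤ ev n u k := by
  unfold ev; split_ifs with h
  · exact hu k h
  · exact le_refl 0

lemma ev_pow {n : ℕ} (u : ℕ → ℝ) {μ : ℝ} (hμ : μ ≠ 0) (k : ℕ) :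
    ev n (fun i => u i ^ μ) k = ev n u k ^ μ := by
  unfold ev; split_ifs with h
  · rfl
  · rw [Real.zero_rpow hμ]

lemma linInterp_eval (n : ℕ) (u : ℕ → ℝ) (i : ℕ) {x : ℝ}
    (hx1 : (i : ℝ) ≤ ((n : ℝ) + 1) * x) (hx2 : ((n : ℝ) + 1) * x ≤ (i : ℝ) + 1) :
    linInterp n u x = ev n u i * (1 - (((n : ℝ) + 1) * x - (i : ℝ)))
      + ev n u (i + 1) * (((n : ℝ) + 1) * x - (i : ℝ)) := by
  set t : ℝ := ((n : ℝ) + 1) * x - (i : ℝ) with htdef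
  have ht0 : 0 ≤ t := by simp [htdef]; linarith
  have ht1 : t ≤ 1 := by simp [htdef]; linarith
  unfold linInterp
  have key : ∀ k ∈ Finset.Icc 1 n, u k * max 0 (1 - |((n : ℝ) + 1) * x - (k : ℝ)|) =
      (if k = i then u k * (1 - t) else 0) + (if k = i + 1 then u k * t else 0) := by
    intro k hk
    by_cases hki : k = i
    · subst hki
      have : |((n : ℝ) + 1) * x - (k : ℝ)| = t := by
        rw [abs_of_nonneg]; exact ht0
      rw [this]
      have : max 0 (1 - t) = 1 - t := max_eq_right (by linarith)
      rw [this]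
      simp [Nat.succ_ne_self]
    · by_cases hki' : k = i + 1
      · subst hki'
        have hc : ((i + 1 : ℕ) : ℝ) = (i : ℝ) + 1 := by push_cast; ring
        have : |((n : ℝ) + 1) * x - ((i + 1 : ℕ) : ℝ)| = 1 - t := by
          rw [hc, abs_of_nonpos (by linarith)]; ring
        rw [this]
        have : max 0 (1 - (1 - t)) = t := by rw [max_eq_right (by linarith)]; ring
        rw [this]
        simp [hki]
      · have : k < i ∨ i + 1 < k := by omega
        have hz : max 0 (1 - |((n : ℝ) + 1) * x - (k : ℝ)|) = 0 := by
          apply max_eq_left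
          rcases this with h | h
          · have hkr : (k : ℝ) + 1 ≤ (i : ℝ) := by exact_mod_cast h
            have : (1 : ℝ) ≤ ((n : ℝ) + 1) * x - (k : ℝ) := by linarith
            have habs : (1 : ℝ) ≤ |((n : ℝ) + 1) * x - (k : ℝ)| := le_trans this (le_abs_self _)
            linarith
          · have hkr : (i : ℝ) + 1 + 1 ≤ (k : ℝ) := by exact_mod_cast h
            have : (1 : ℝ) ≤ (k : ℝ) - ((n : ℝ) + 1) * x := by linarith
            have habs : (1 : ℝ) ≤ |((n : ℝ) + 1) * x - (k : ℝ)| := by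
              rw [abs_sub_comm]; exact le_trans this (le_abs_self _)
            linarith
        rw [hz, mul_zero]
        simp [hki, hki']
  rw [Finset.sum_congr rfl key, Finset.sum_add_distrib,
    Finset.sum_ite_eq' (Finset.Icc 1 n) i (fun k => u k * (1 - t)),
    Finset.sum_ite_eq' (Finset.Icc 1 n) (i + 1) (fun k => u k * t)]
  unfold ev
  split_ifs <;> ring

lemma cell_bounds {n i : ℕ} {x : ℝ}
    (hx : x ∈ Set.Icc ((i : ℝ) / ((n : ℝ) + 1)) (((i : ℝ) + 1) / ((n : ℝ) + 1))) :
    (i : ℝ) ≤ ((n : ℝ) + 1) * x ∧ ((n : ℝ) + 1) * x ≤ (i : ℝ) + 1 := by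
  have hN : (0 : ℝ) < (n : ℝ) + 1 := by positivity
  constructor
  · have := hx.1; rw [div_le_iff₀ hN] at this; linarith
  · have := hx.2; rw [le_div_iff₀ hN] at this; linarith

lemma linInterp_sub {n : ℕ} (u : ℕ → ℝ) (i : ℕ) {x y : ℝ}
    (hx : x ∈ Set.Icc ((i : ℝ) / ((n : ℝ) + 1)) (((i : ℝ) + 1) / ((n : ℝ) + 1)))
    (hy : y ∈ Set.Icc ((i : ℝ) / ((n : ℝ) + 1)) (((i : ℝ) + 1) / ((n : ℝ) + 1))) :
    linInterp n u x - linInterp n u y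
      = (ev n u (i + 1) - ev n u i) * (((n : ℝ) + 1) * (x - y)) := by
  obtain ⟨hx1, hx2⟩ := cell_bounds hx
  obtain ⟨hy1, hy2⟩ := cell_bounds hy
  rw [linInterp_eval n u i hx1 hx2, linInterp_eval n u i hy1 hy2]
  ring

lemma linInterp_mem {n : ℕ} {u : ℕ → ℝ} (hu : ∀ i ∈ Finset.Icc 1 n, 0 ≤ u i) (i : ℕ) {x : ℝ}
    (hx : x ∈ Set.Icc ((i : ℝ) / ((n : ℝ) + 1)) (((i : ℝ) + 1) / ((n : ℝ) + 1))) :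
    linInterp n u x ∈ Set.Icc 0 (max (ev n u i) (ev n u (i + 1))) := by
  obtain ⟨hx1, hx2⟩ := cell_bounds hx
  rw [linInterp_eval n u i hx1 hx2]
  have ha := ev_nonneg hu i
  have hb := ev_nonneg hu (i + 1)
  have hma : ev n u i ≤ max (ev n u i) (ev n u (i + 1)) := le_max_left _ _
  have hmb : ev n u (i + 1) ≤ max (ev n u i) (ev n u (i + 1)) := le_max_right _ _
  constructor
  · nlinarith
  · nlinarith

/-- Lipschitz bound for `(linInterp n u)^μ` on a single cell. -/
lemma cell_lip {n : ℕ} {u : ℕ → ℝ} (hu : ∀ i ∈ Finset.Icc 1 n, 0 ≤ u i)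
    {μ : ℝ} (hμ : 1 ≤ μ) (i : ℕ) {x y : ℝ}
    (hx : x ∈ Set.Icc ((i : ℝ) / ((n : ℝ) + 1)) (((i : ℝ) + 1) / ((n : ℝ) + 1)))
    (hy : y ∈ Set.Icc ((i : ℝ) / ((n : ℝ) + 1)) (((i : ℝ) + 1) / ((n : ℝ) + 1))) :
    |linInterp n u x ^ μ - linInterp n u y ^ μ|
      ≤ μ * (((n : ℝ) + 1) * |ev n u (i + 1) ^ μ - ev n u i ^ μ|) * |x - y| := by
  set M := max (ev n u i) (ev n u (i + 1)) with hM
  obtain ⟨hfy0, hfyM⟩ := linInterp_mem hu i hy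
  obtain ⟨hfx0, hfxM⟩ := linInterp_mem hu i hx
  have h1 : |linInterp n u x ^ μ - linInterp n u y ^ μ|
      ≤ μ * M ^ (μ - 1) * |linInterp n u x - linInterp n u y| :=
    aux_abs_pow_sub_le hμ hfy0 hfx0 hfyM hfxM
  have h2 : |linInterp n u x - linInterp n u y|
      = |ev n u (i + 1) - ev n u i| * (((n : ℝ) + 1) * |x - y|) := by
    rw [linInterp_sub u i hx hy, abs_mul, abs_mul]
    have : |(n : ℝ) + 1| = (n : ℝ) + 1 := abs_of_nonneg (by positivity)
    rw [this]
  have h3 : M ^ (μ - 1) * |ev n u (i + 1) - ev n u i|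
      ≤ |ev n u (i + 1) ^ μ - ev n u i ^ μ| := by
    have := aux_max_pow_ge hμ (ev_nonneg hu i) (ev_nonneg hu (i + 1)) (μ := μ)
    exact this
  calc |linInterp n u x ^ μ - linInterp n u y ^ μ|
      ≤ μ * M ^ (μ - 1) * (|ev n u (i + 1) - ev n u i| * (((n : ℝ) + 1) * |x - y|)) := by
        rw [← h2]; exact h1
    _ ≤ μ * (((n : ℝ) + 1) * |ev n u (i + 1) ^ μ - ev n u i ^ μ|) * |x - y| := by
        have hμ0 : (0 : ℝ) ≤ μ := by linarith
        have hN0 : (0 : ℝ) ≤ (n : ℝ) + 1 := by positivity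
        have habs : (0 : ℝ) ≤ |x - y| := abs_nonneg _
        nlinarith [mul_le_mul_of_nonneg_left h3 (mul_nonneg hμ0 (mul_nonneg hN0 habs))]


/-- Lipschitz bound across two adjacent cells `i` and `i+1`. -/
lemma pair_lip_adj {n : ℕ} {u : ℕ → ℝ} (hu : ∀ i ∈ Finset.Icc 1 n, 0 ≤ u i)
    {μ : ℝ} (hμ : 1 ≤ μ) (i : ℕ) {x y : ℝ}
    (hx : x ∈ Set.Icc ((i : ℝ) / ((n : ℝ) + 1)) (((i : ℝ) + 1) / ((n : ℝ) + 1)))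
    (hy : y ∈ Set.Icc (((i + 1 : ℕ) : ℝ) / ((n : ℝ) + 1)) ((((i + 1 : ℕ) : ℝ) + 1) / ((n : ℝ) + 1))) :
    |linInterp n u x ^ μ - linInterp n u y ^ μ|
      ≤ μ * (((n : ℝ) + 1) * |ev n u (i + 1) ^ μ - ev n u i ^ μ|
            + ((n : ℝ) + 1) * |ev n u (i + 1 + 1) ^ μ - ev n u (i + 1) ^ μ|) * |x - y| := by
  have hN : (0 : ℝ) < (n : ℝ) + 1 := by positivity
  set Si := ((n : ℝ) + 1) * |ev n u (i + 1) ^ μ - ev n u i ^ μ| with hSi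
  set Sj := ((n : ℝ) + 1) * |ev n u (i + 1 + 1) ^ μ - ev n u (i + 1) ^ μ| with hSj
  have hSi0 : 0 ≤ Si := by positivity
  have hSj0 : 0 ≤ Sj := by positivity
  have hμ0 : (0 : ℝ) ≤ μ := by linarith
  set m : ℝ := ((i : ℝ) + 1) / ((n : ℝ) + 1) with hm
  have hmi : m ∈ Set.Icc ((i : ℝ) / ((n : ℝ) + 1)) (((i : ℝ) + 1) / ((n : ℝ) + 1)) :=
    ⟨(div_le_div_iff_of_pos_right hN).mpr (by linarith), le_refl m⟩
  have hmj : m ∈ Set.Icc (((i + 1 : ℕ) : ℝ) / ((n : ℝ) + 1))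
      ((((i + 1 : ℕ) : ℝ) + 1) / ((n : ℝ) + 1)) := by
    constructor
    · rw [hm]; push_cast; exact le_refl _
    · rw [hm]; apply (div_le_div_iff_of_pos_right hN).mpr; push_cast; linarith
  have hxm : x ≤ m := hx.2
  have hmy : m ≤ y := by
    have h := hy.1; rw [hm]; push_cast at h ⊢; linarith
  have e1 : |x - m| ≤ |x - y| := by
    rw [abs_of_nonpos (by linarith), abs_of_nonpos (by linarith)]; linarith
  have e2 : |m - y| ≤ |x - y| := by
    rw [abs_of_nonpos (by linarith), abs_of_nonpos (by linarith)]; linarith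
  have t1 := cell_lip hu hμ i hx hmi
  have t2 := cell_lip hu hμ (i + 1) hmj hy
  rw [← hSi] at t1
  rw [← hSj] at t2
  calc |linInterp n u x ^ μ - linInterp n u y ^ μ|
      ≤ |linInterp n u x ^ μ - linInterp n u m ^ μ|
        + |linInterp n u m ^ μ - linInterp n u y ^ μ| := abs_sub_le _ _ _
    _ ≤ μ * Si * |x - y| + μ * Sj * |x - y| := by
        have b1 : μ * Si * |x - m| ≤ μ * Si * |x - y| :=
          mul_le_mul_of_nonneg_left e1 (mul_nonneg hμ0 hSi0)
        have b2 : μ * Sj * |m - y| ≤ μ * Sj * |x - y| :=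
          mul_le_mul_of_nonneg_left e2 (mul_nonneg hμ0 hSj0)
        linarith
    _ = μ * (Si + Sj) * |x - y| := by ring

/-- Lipschitz bound for `(linInterp n u)^μ` across a pair of (weakly) adjacent cells. -/
lemma pair_lip {n : ℕ} {u : ℕ → ℝ} (hu : ∀ i ∈ Finset.Icc 1 n, 0 ≤ u i)
    {μ : ℝ} (hμ : 1 ≤ μ) {i j : ℕ} (hij : i ≤ j + 1 ∧ j ≤ i + 1) {x y : ℝ}
    (hx : x ∈ Set.Icc ((i : ℝ) / ((n : ℝ) + 1)) (((i : ℝ) + 1) / ((n : ℝ) + 1)))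
    (hy : y ∈ Set.Icc ((j : ℝ) / ((n : ℝ) + 1)) (((j : ℝ) + 1) / ((n : ℝ) + 1))) :
    |linInterp n u x ^ μ - linInterp n u y ^ μ|
      ≤ μ * (((n : ℝ) + 1) * |ev n u (i + 1) ^ μ - ev n u i ^ μ|
            + ((n : ℝ) + 1) * |ev n u (j + 1) ^ μ - ev n u j ^ μ|) * |x - y| := by
  have hN : (0 : ℝ) < (n : ℝ) + 1 := by positivity
  have hμ0 : (0 : ℝ) ≤ μ := by linarith
  rcases show i = j ∨ j = i + 1 ∨ i = j + 1 by omega with h | h | h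
  · subst h
    have t := cell_lip hu hμ i hx hy
    have hS0 : 0 ≤ ((n : ℝ) + 1) * |ev n u (i + 1) ^ μ - ev n u i ^ μ| := by positivity
    nlinarith [mul_nonneg (mul_nonneg hμ0 hS0) (abs_nonneg (x - y))]
  · subst h
    have hy' : y ∈ Set.Icc (((i + 1 : ℕ) : ℝ) / ((n : ℝ) + 1))
        ((((i + 1 : ℕ) : ℝ) + 1) / ((n : ℝ) + 1)) := hy
    exact pair_lip_adj hu hμ i hx hy'
  · subst h
    have hx' : x ∈ Set.Icc (((j + 1 : ℕ) : ℝ) / ((n : ℝ) + 1))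
        ((((j + 1 : ℕ) : ℝ) + 1) / ((n : ℝ) + 1)) := hx
    have t := pair_lip_adj hu hμ j hy hx'
    rw [abs_sub_comm (linInterp n u y ^ μ), abs_sub_comm y x] at t
    calc |linInterp n u x ^ μ - linInterp n u y ^ μ|
        ≤ μ * (((n : ℝ) + 1) * |ev n u (j + 1) ^ μ - ev n u j ^ μ|
            + ((n : ℝ) + 1) * |ev n u (j + 1 + 1) ^ μ - ev n u (j + 1) ^ μ|) * |x - y| := t
      _ = μ * (((n : ℝ) + 1) * |ev n u (j + 1 + 1) ^ μ - ev n u (j + 1) ^ μ|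
            + ((n : ℝ) + 1) * |ev n u (j + 1) ^ μ - ev n u j ^ μ|) * |x - y| := by ring

lemma aux_intervalIntegrable_abs_rpow {q : ℝ} (hq : -1 < q) (a b : ℝ) :
    IntervalIntegrable (fun t : ℝ => |t| ^ q) volume a b := by
  have h0 : ∀ c : ℝ, IntervalIntegrable (fun t : ℝ => |t| ^ q) volume 0 c := by
    intro c
    rcases le_total 0 c with hc | hc
    · rw [intervalIntegrable_iff, Set.uIoc_of_le hc]
      apply IntegrableOn.congr_fun
        (f := fun t : ℝ => t ^ q)
      · rw [← Set.uIoc_of_le hc, ← intervalIntegrable_iff]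
        exact intervalIntegral.intervalIntegrable_rpow' hq
      · intro t ht
        simp only []
        rw [abs_of_nonneg (le_of_lt ht.1)]
      · exact measurableSet_Ioc
    · rw [intervalIntegrable_iff, Set.uIoc_of_ge hc]
      apply IntegrableOn.congr_fun (f := fun t : ℝ => (-t) ^ q)
      · have h1 : IntervalIntegrable (fun t : ℝ => t ^ q) volume 0 (-c) :=
          intervalIntegral.intervalIntegrable_rpow' hq
        have h2 := (IntervalIntegrable.iff_comp_neg (by simp)).mp h1
        simp only [neg_zero, neg_neg] at h2
        rw [intervalIntegrable_iff, Set.uIoc_of_ge hc] at h2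
        exact h2
      · intro t ht
        simp only []
        rw [abs_of_nonpos ht.2]
      · exact measurableSet_Ioc
  exact ((h0 a).symm.trans (h0 b))

lemma aux_integrableOn_abs_rpow {q : ℝ} (hq : -1 < q) (x a b : ℝ) :
    IntegrableOn (fun y : ℝ => |y - x| ^ q) (Set.Icc a b) volume := by
  rcases le_total a b with hab | hab
  · have h1 := (aux_intervalIntegrable_abs_rpow hq (a - x) (b - x)).comp_sub_right x
    simp only [sub_add_cancel] at h1
    rw [intervalIntegrable_iff, Set.uIoc_of_le hab] at h1
    rwa [integrableOn_Icc_iff_integrableOn_Ioc]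
  · rcases lt_or_eq_of_le hab with h | h
    · rw [Set.Icc_eq_empty (by exact not_le_of_gt h)]
      exact integrableOn_empty
    · subst h
      rw [Set.Icc_self]
      exact (integrableOn_singleton_iff (μ := volume) (x := b)
        (f := fun y : ℝ => |y - x| ^ q)).mpr (Or.inr (by rw [Real.volume_singleton]; exact ENNReal.zero_lt_top))
lemma aux_integral_abs_rpow_pos {q : ℝ} (hq : -1 < q) {L : ℝ} (hL : 0 ≤ L) :
    ∫ t in (0:ℝ)..L, |t| ^ q = L ^ (q + 1) / (q + 1) := by
  have : ∫ t in (0:ℝ)..L, |t| ^ q = ∫ t in (0:ℝ)..L, t ^ q := by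
    apply intervalIntegral.integral_congr
    intro t ht
    rw [Set.uIcc_of_le hL] at ht
    simp only []
    rw [abs_of_nonneg ht.1]
  rw [this, integral_rpow (Or.inl hq)]
  rw [Real.zero_rpow (by linarith), sub_zero]

lemma aux_integral_abs_rpow_neg {q : ℝ} (hq : -1 < q) {L : ℝ} (hL : 0 ≤ L) :
    ∫ t in (-L)..(0:ℝ), |t| ^ q = L ^ (q + 1) / (q + 1) := by
  have h := intervalIntegral.integral_comp_neg (a := (0:ℝ)) (b := L) (fun t : ℝ => |t| ^ q)
  simp only [abs_neg, neg_zero] at h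
  rw [← h]
  exact aux_integral_abs_rpow_pos hq hL

lemma aux_integral_abs_rpow_sym {q : ℝ} (hq : -1 < q) {L : ℝ} (hL : 0 ≤ L) :
    ∫ t in Set.Icc (-L) L, |t| ^ q = 2 * L ^ (q + 1) / (q + 1) := by
  rw [MeasureTheory.integral_Icc_eq_integral_Ioc,
    ← intervalIntegral.integral_of_le (by linarith : -L ≤ L)]
  rw [← intervalIntegral.integral_add_adjacent_intervals
    (aux_intervalIntegrable_abs_rpow hq (-L) 0) (aux_intervalIntegrable_abs_rpow hq 0 L)]
  rw [aux_integral_abs_rpow_neg hq hL, aux_integral_abs_rpow_pos hq hL]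
  ring

lemma aux_inner_upper {q : ℝ} (hq : -1 < q) {c d x L : ℝ} (hcd : c ≤ d)
    (h1 : -L ≤ c - x) (h2 : d - x ≤ L) :
    ∫ y in Set.Icc c d, |y - x| ^ q ≤ 2 * L ^ (q + 1) / (q + 1) := by
  have hL : 0 ≤ L := by linarith
  rw [MeasureTheory.integral_Icc_eq_integral_Ioc, ← intervalIntegral.integral_of_le hcd,
    intervalIntegral.integral_comp_sub_right (fun t : ℝ => |t| ^ q) x,
    intervalIntegral.integral_of_le (by linarith : c - x ≤ d - x)]
  calc ∫ t in Set.Ioc (c - x) (d - x), |t| ^ q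
      ≤ ∫ t in Set.Icc (-L) L, |t| ^ q := by
        apply setIntegral_mono_set
          (aux_integrableOn_abs_rpow hq 0 (-L) L |>.congr_fun (fun t _ => by simp only [sub_zero]) measurableSet_Icc)
          (Filter.Eventually.of_forall fun t => Real.rpow_nonneg (abs_nonneg t) q)
        exact (Set.Ioc_subset_Icc_self.trans (Set.Icc_subset_Icc h1 h2)).eventuallyLE
    _ = 2 * L ^ (q + 1) / (q + 1) := aux_integral_abs_rpow_sym hq hL

lemma aux_inner_formula {q : ℝ} (hq : -1 < q) {a b x : ℝ} (hax : a ≤ x) (hxb : x ≤ b) :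
    ∫ y in Set.Icc a b, |y - x| ^ q = ((x - a) ^ (q + 1) + (b - x) ^ (q + 1)) / (q + 1) := by
  rw [MeasureTheory.integral_Icc_eq_integral_Ioc,
    ← intervalIntegral.integral_of_le (hax.trans hxb),
    intervalIntegral.integral_comp_sub_right (fun t : ℝ => |t| ^ q) x,
    ← intervalIntegral.integral_add_adjacent_intervals
      (aux_intervalIntegrable_abs_rpow hq (a - x) 0) (aux_intervalIntegrable_abs_rpow hq 0 (b - x))]
  have e : a - x = -(x - a) := by ring
  rw [e, aux_integral_abs_rpow_neg hq (by linarith), aux_integral_abs_rpow_pos hq (by linarith)]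
  ring

lemma aux_diag_lower {q : ℝ} (hq : -1 < q) {a b : ℝ} (hab : a ≤ b) :
    ((b - a) / 2) ^ (q + 1) / (q + 1) * ((b - a) / 2)
      ≤ ∫ x in Set.Icc a b, (∫ y in Set.Icc a b, |y - x| ^ q) := by
  have hq1 : (0:ℝ) < q + 1 := by linarith
  set φ : ℝ → ℝ := fun x => ((x - a) ^ (q + 1) + (b - x) ^ (q + 1)) / (q + 1) with hφ
  have hstep1 : ∫ x in Set.Icc a b, (∫ y in Set.Icc a b, |y - x| ^ q)
      = ∫ x in Set.Icc a b, φ x :=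
    setIntegral_congr_fun measurableSet_Icc (fun x hx => aux_inner_formula hq hx.1 hx.2)
  have hc : Continuous φ := by
    have h1 : Continuous fun x : ℝ => (x - a) ^ (q + 1) :=
      (Real.continuous_rpow_const (by linarith)).comp (continuous_sub_right a)
    have h2 : Continuous fun x : ℝ => (b - x) ^ (q + 1) :=
      (Real.continuous_rpow_const (by linarith)).comp (continuous_const.sub continuous_id)
    exact (h1.add h2).div_const _
  set m : ℝ := (a + b) / 2 with hm
  have ham : a ≤ m := by rw [hm]; linarith
  have hmb : m ≤ b := by rw [hm]; linarith
  have hstep3 : ∫ x in Set.Icc a m, φ x ≤ ∫ x in Set.Icc a b, φ x := by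
    apply setIntegral_mono_set (hc.integrableOn_Icc)
    · rw [Filter.EventuallyLE]
      apply (ae_restrict_iff' measurableSet_Icc).mpr
      apply Filter.Eventually.of_forall
      intro x hx
      simp only [Pi.zero_apply, hφ]
      apply div_nonneg _ (by linarith)
      exact add_nonneg (Real.rpow_nonneg (by linarith [hx.1]) _)
        (Real.rpow_nonneg (by linarith [hx.2]) _)
    · exact (Set.Icc_subset_Icc_right hmb).eventuallyLE
  have hstep4 : ((b - a) / 2) ^ (q + 1) / (q + 1) * ((b - a) / 2) ≤ ∫ x in Set.Icc a m, φ x := by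
    have hvol : (volume (Set.Icc a m)).toReal = (b - a) / 2 := by
      rw [Real.volume_Icc, ENNReal.toReal_ofReal (by linarith)]
      rw [hm]; ring
    have := setIntegral_ge_of_const_le (μ := volume) (s := Set.Icc a m)
      (c := ((b - a) / 2) ^ (q + 1) / (q + 1)) (f := φ) measurableSet_Icc
      (by rw [Real.volume_Icc]; exact ENNReal.ofReal_ne_top)
      (fun x hx => by
        have hx1 : a ≤ x := hx.1
        have hx2 : x ≤ m := hx.2
        have hb : (b - a) / 2 ≤ b - x := by rw [hm] at hx2; linarith
        have hr : ((b - a) / 2) ^ (q + 1) ≤ (b - x) ^ (q + 1) :=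
          Real.rpow_le_rpow (by linarith) hb (by linarith)
        have h0 : (0:ℝ) ≤ (x - a) ^ (q + 1) := Real.rpow_nonneg (by linarith) _
        simp only [hφ]
        rw [div_le_div_iff_of_pos_right hq1]  -- maybe wrong name
        linarith)
      (hc.integrableOn_Icc)
    rw [measureReal_def, hvol, smul_eq_mul] at this
    linarith
  rw [hstep1]
  exact le_trans hstep4 hstep3

lemma aux_sum_ite_le {n : ℕ} (m : ℕ) (P : ℕ → Prop) [DecidablePred P]
    (hP : ∀ k, P k → m ≤ k + 1 ∧ k ≤ m + 1) {c : ℝ} (hc : 0 ≤ c) :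
    ∑ k ∈ Finset.range (n + 1), (if P k then c else 0) ≤ 3 * c := by
  rw [← Finset.sum_filter, Finset.sum_const, nsmul_eq_mul]
  have hcard : (Finset.filter P (Finset.range (n + 1))).card ≤ 3 := by
    have hsub : Finset.filter P (Finset.range (n + 1)) ⊆ Finset.Icc (m - 1) (m + 1) := by
      intro k hk
      rw [Finset.mem_filter] at hk
      have := hP k hk.2
      rw [Finset.mem_Icc]; omega
    calc (Finset.filter P (Finset.range (n + 1))).card
        ≤ (Finset.Icc (m - 1) (m + 1)).card := Finset.card_le_card hsub
      _ ≤ 3 := by rw [Nat.card_Icc]; omega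
  exact mul_le_mul_of_nonneg_right (by exact_mod_cast hcard) hc

lemma aux_ratio (θ : ℝ) {z : ℝ} (hz : 0 < |z|) (K : ℝ) :
    (K * |z|) ^ 2 / |z| ^ (1 + 2 * θ) = K ^ 2 * |z| ^ (1 - 2 * θ) := by
  rw [mul_pow, mul_div_assoc]
  congr 1
  rw [← Real.rpow_natCast |z| 2, ← Real.rpow_sub hz]
  have : ((2 : ℕ) : ℝ) - (1 + 2 * θ) = 1 - 2 * θ := by push_cast; ring
  rw [this]

lemma aux_ae_ne (x : ℝ) : ∀ᵐ y : ℝ, y ≠ x := by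
  rw [ae_iff]
  have : {y : ℝ | ¬ y ≠ x} = {x} := by ext y; simp
  rw [this]
  exact measure_singleton x


noncomputable def slopeS (n : ℕ) (u : ℕ → ℝ) (μ : ℝ) (k : ℕ) : ℝ :=
  ((n : ℝ) + 1) * |ev n u (k + 1) ^ μ - ev n u k ^ μ|

lemma slopeS_nonneg (n : ℕ) (u : ℕ → ℝ) (μ : ℝ) (k : ℕ) : 0 ≤ slopeS n u μ k := by
  unfold slopeS; positivity

lemma pair_lip'' {n : ℕ} {u : ℕ → ℝ} (hu : ∀ i ∈ Finset.Icc 1 n, 0 ≤ u i)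
    {μ : ℝ} (hμ : 1 ≤ μ) {i j : ℕ} (hij : i ≤ j + 1 ∧ j ≤ i + 1) {x y : ℝ}
    (hx : x ∈ Set.Icc ((i : ℝ) / ((n : ℝ) + 1)) (((i : ℝ) + 1) / ((n : ℝ) + 1)))
    (hy : y ∈ Set.Icc ((j : ℝ) / ((n : ℝ) + 1)) (((j : ℝ) + 1) / ((n : ℝ) + 1))) :
    |linInterp n u x ^ μ - linInterp n u y ^ μ|
      ≤ μ * (slopeS n u μ i + slopeS n u μ j) * |x - y| := by
  unfold slopeS; exact pair_lip hu hμ hij hx hy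

/-- For every `θ ∈ (0,1)` and `μ ≥ 1` there is `C > 0`, independent of `n`, such that
for every `n ≥ 1` and every nonnegative vector `u ∈ ℝⁿ`,
`N_{θ,n}((𝔏_n u)^μ) ≤ C ⬝ N_{θ,n}(𝔏_n(u^μ))`, with pointwise powers. -/
theorem stmt14 (θ : ℝ) (hθ0 : 0 < θ) (hθ1 : θ < 1) (μ : ℝ) (hμ : 1 ≤ μ) :
    ∃ C : ℝ, 0 < C ∧ ∀ n : ℕ, 1 ≤ n → ∀ u : ℕ → ℝ,
      (∀ i ∈ Finset.Icc 1 n, 0 ≤ u i) →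
      gagliardo θ n (fun x => linInterp n u x ^ μ) ≤
        C * gagliardo θ n (linInterp n fun i => u i ^ μ) := by

  classical
  have hμ0 : (0:ℝ) < μ := by linarith
  have hμne : μ ≠ 0 := ne_of_gt hμ0
  refine ⟨28 * μ, by linarith, ?_⟩
  intro n hn u hu
  have hN : (0:ℝ) < (n:ℝ) + 1 := by positivity
  have hq : (-1:ℝ) < 1 - 2*θ := by linarith
  set q : ℝ := 1 - 2*θ with hqdef
  have hq1 : (0:ℝ) < q + 1 := by rw [hqdef]; linarith
  set c1 : ℝ := 2 * (2/((n:ℝ)+1)) ^ (q+1) / (q+1) * (1/((n:ℝ)+1)) with hc1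
  set c0 : ℝ := ((1/((n:ℝ)+1))/2) ^ (q+1) / (q+1) * ((1/((n:ℝ)+1))/2) with hc0
  have hc1pos : 0 < c1 := by rw [hc1]; positivity
  have hc0pos : 0 < c0 := by rw [hc0]; positivity
  -- Upper bound for each near-diagonal term of the power function
  have claimU : ∀ i j : ℕ, i ≤ j + 1 → j ≤ i + 1 →
      (∫ x in Set.Icc ((i:ℝ)/((n:ℝ)+1)) (((i:ℝ)+1)/((n:ℝ)+1)),
        ∫ y in Set.Icc ((j:ℝ)/((n:ℝ)+1)) (((j:ℝ)+1)/((n:ℝ)+1)),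
          |linInterp n u x ^ μ - linInterp n u y ^ μ| ^ 2 / |x - y| ^ (1 + 2*θ))
      ≤ (μ * (slopeS n u μ i + slopeS n u μ j))^2 * c1 := by
    intro i j hij1 hij2
    have hij : i ≤ j + 1 ∧ j ≤ i + 1 := ⟨hij1, hij2⟩
    set K : ℝ := μ * (slopeS n u μ i + slopeS n u μ j) with hK
    have hK0 : 0 ≤ K := by
      rw [hK]
      exact mul_nonneg hμ0.le (add_nonneg (slopeS_nonneg n u μ i) (slopeS_nonneg n u μ j))
    have hcd : (j:ℝ)/((n:ℝ)+1) ≤ ((j:ℝ)+1)/((n:ℝ)+1) := (div_le_div_iff_of_pos_right hN).mpr (by linarith)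
    have hMub : ∀ x ∈ Set.Icc ((i:ℝ)/((n:ℝ)+1)) (((i:ℝ)+1)/((n:ℝ)+1)),
        (∫ y in Set.Icc ((j:ℝ)/((n:ℝ)+1)) (((j:ℝ)+1)/((n:ℝ)+1)),
          |linInterp n u x ^ μ - linInterp n u y ^ μ| ^ 2 / |x - y| ^ (1 + 2*θ))
        ≤ K^2 * (2 * (2/((n:ℝ)+1))^(q+1)/(q+1)) := by
      intro x hx
      have hgeo1 : -(2/((n:ℝ)+1)) ≤ (j:ℝ)/((n:ℝ)+1) - x := by
        have hci : (i:ℝ) + 1 ≤ (j:ℝ) + 2 := by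
          have : (i:ℝ) ≤ (j:ℝ) + 1 := by exact_mod_cast hij1
          linarith
        have e2 : ((i:ℝ)+1)/((n:ℝ)+1) ≤ ((j:ℝ)+2)/((n:ℝ)+1) := (div_le_div_iff_of_pos_right hN).mpr hci
        have e3 : ((j:ℝ)+2)/((n:ℝ)+1) = (j:ℝ)/((n:ℝ)+1) + 2/((n:ℝ)+1) := by ring
        have h4 := hx.2
        linarith
      have hgeo2 : ((j:ℝ)+1)/((n:ℝ)+1) - x ≤ 2/((n:ℝ)+1) := by
        have hcj : (j:ℝ) - 1 ≤ (i:ℝ) := by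
          have : (j:ℝ) ≤ (i:ℝ) + 1 := by exact_mod_cast hij2
          linarith
        have e2 : ((j:ℝ)-1)/((n:ℝ)+1) ≤ (i:ℝ)/((n:ℝ)+1) := (div_le_div_iff_of_pos_right hN).mpr hcj
        have e3 : ((j:ℝ)+1)/((n:ℝ)+1) - ((j:ℝ)-1)/((n:ℝ)+1) = 2/((n:ℝ)+1) := by ring
        have h4 := hx.1
        linarith
      have hptwise : ∀ y ∈ Set.Icc ((j:ℝ)/((n:ℝ)+1)) (((j:ℝ)+1)/((n:ℝ)+1)),
          |linInterp n u x ^ μ - linInterp n u y ^ μ| ^ 2 / |x - y| ^ (1 + 2*θ)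
            ≤ K^2 * |y - x| ^ q := by
        intro y hy
        rcases eq_or_ne x y with rfl | hxy
        · simp only [sub_self, abs_zero]
          rw [zero_pow (by norm_num), zero_div]
          positivity
        · have hz : 0 < |x - y| := abs_pos.mpr (sub_ne_zero.mpr hxy)
          have hlip := pair_lip'' hu hμ hij hx hy
          rw [← hK] at hlip
          calc |linInterp n u x ^ μ - linInterp n u y ^ μ| ^ 2 / |x - y| ^ (1 + 2*θ)
              ≤ (K * |x - y|) ^ 2 / |x - y| ^ (1 + 2*θ) := by
                exact (div_le_div_iff_of_pos_right (Real.rpow_pos_of_pos hz _)).mpr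
                  (pow_le_pow_left₀ (abs_nonneg _) hlip 2)
            _ = K^2 * |y - x| ^ q := by
                rw [aux_ratio θ hz, abs_sub_comm x y, hqdef]
      calc (∫ y in Set.Icc ((j:ℝ)/((n:ℝ)+1)) (((j:ℝ)+1)/((n:ℝ)+1)),
            |linInterp n u x ^ μ - linInterp n u y ^ μ| ^ 2 / |x - y| ^ (1 + 2*θ))
          ≤ ∫ y in Set.Icc ((j:ℝ)/((n:ℝ)+1)) (((j:ℝ)+1)/((n:ℝ)+1)), K^2 * |y - x| ^ q := by
            apply integral_mono_of_nonneg
            · exact Filter.Eventually.of_forall fun y => by positivity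
            · exact (aux_integrableOn_abs_rpow hq x _ _).const_mul (K^2)
            · exact (ae_restrict_iff' measurableSet_Icc).mpr (Filter.Eventually.of_forall hptwise)
        _ = K^2 * ∫ y in Set.Icc ((j:ℝ)/((n:ℝ)+1)) (((j:ℝ)+1)/((n:ℝ)+1)), |y - x| ^ q :=
            integral_const_mul _ _
        _ ≤ K^2 * (2 * (2/((n:ℝ)+1))^(q+1)/(q+1)) := by
            apply mul_le_mul_of_nonneg_left ?_ (sq_nonneg K)
            exact aux_inner_upper hq hcd hgeo1 hgeo2
    calc (∫ x in Set.Icc ((i:ℝ)/((n:ℝ)+1)) (((i:ℝ)+1)/((n:ℝ)+1)),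
          ∫ y in Set.Icc ((j:ℝ)/((n:ℝ)+1)) (((j:ℝ)+1)/((n:ℝ)+1)),
            |linInterp n u x ^ μ - linInterp n u y ^ μ| ^ 2 / |x - y| ^ (1 + 2*θ))
        ≤ ∫ x in Set.Icc ((i:ℝ)/((n:ℝ)+1)) (((i:ℝ)+1)/((n:ℝ)+1)),
            K^2 * (2 * (2/((n:ℝ)+1))^(q+1)/(q+1)) := by
          apply integral_mono_of_nonneg
          · exact Filter.Eventually.of_forall fun x => integral_nonneg fun y => by positivity
          · exact (integrableOn_const_iff).mpr (Or.inr (by rw [Real.volume_Icc]; exact ENNReal.ofReal_lt_top))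
          · exact (ae_restrict_iff' measurableSet_Icc).mpr (Filter.Eventually.of_forall hMub)
      _ = (volume (Set.Icc ((i:ℝ)/((n:ℝ)+1)) (((i:ℝ)+1)/((n:ℝ)+1)))).toReal
            • (K^2 * (2 * (2/((n:ℝ)+1))^(q+1)/(q+1))) := setIntegral_const _
      _ = K^2 * c1 := by
          rw [Real.volume_Icc, ENNReal.toReal_ofReal
            (by rw [show ((i:ℝ)+1)/((n:ℝ)+1) - (i:ℝ)/((n:ℝ)+1) = 1/((n:ℝ)+1) from by ring]; positivity),
            smul_eq_mul, hc1,
            show ((i:ℝ)+1)/((n:ℝ)+1) - (i:ℝ)/((n:ℝ)+1) = 1/((n:ℝ)+1) from by ring]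
          ring
  -- Lower bound for each diagonal term of the interpolated powers
  have claimD : ∀ i : ℕ,
      slopeS n u μ i ^ 2 * c0 ≤
      (∫ x in Set.Icc ((i:ℝ)/((n:ℝ)+1)) (((i:ℝ)+1)/((n:ℝ)+1)),
        ∫ y in Set.Icc ((i:ℝ)/((n:ℝ)+1)) (((i:ℝ)+1)/((n:ℝ)+1)),
          |linInterp n (fun k => u k ^ μ) x - linInterp n (fun k => u k ^ μ) y| ^ 2
            / |x - y| ^ (1 + 2*θ)) := by
    intro i
    set a : ℝ := (i:ℝ)/((n:ℝ)+1) with ha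
    set b : ℝ := ((i:ℝ)+1)/((n:ℝ)+1) with hb
    have hab : a ≤ b := by rw [ha, hb]; exact (div_le_div_iff_of_pos_right hN).mpr (by linarith)
    have hinner : ∀ x ∈ Set.Icc a b,
        (∫ y in Set.Icc a b,
          |linInterp n (fun k => u k ^ μ) x - linInterp n (fun k => u k ^ μ) y| ^ 2
            / |x - y| ^ (1 + 2*θ))
        = slopeS n u μ i ^ 2 * ∫ y in Set.Icc a b, |y - x| ^ q := by
      intro x hx
      rw [← integral_const_mul]
      apply setIntegral_congr_ae measurableSet_Icc
      filter_upwards [aux_ae_ne x] with y hyx hy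
      have hz : 0 < |x - y| := abs_pos.mpr (sub_ne_zero.mpr (Ne.symm hyx))
      have hsub := linInterp_sub (n := n) (fun k => u k ^ μ) i hx hy
      rw [ev_pow u hμne (i+1), ev_pow u hμne i] at hsub
      have h1 : |linInterp n (fun k => u k ^ μ) x - linInterp n (fun k => u k ^ μ) y|
          = slopeS n u μ i * |x - y| := by
        rw [hsub, abs_mul, abs_mul, abs_of_nonneg hN.le]
        unfold slopeS; ring
      rw [h1, aux_ratio θ hz, abs_sub_comm x y, hqdef]
    have houter : (∫ x in Set.Icc a b,
        ∫ y in Set.Icc a b,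
          |linInterp n (fun k => u k ^ μ) x - linInterp n (fun k => u k ^ μ) y| ^ 2
            / |x - y| ^ (1 + 2*θ))
        = slopeS n u μ i ^ 2 * ∫ x in Set.Icc a b, ∫ y in Set.Icc a b, |y - x| ^ q := by
      rw [← integral_const_mul]
      exact setIntegral_congr_fun measurableSet_Icc hinner
    rw [houter]
    have hd := aux_diag_lower hq hab
    rw [show b - a = 1/((n:ℝ)+1) from by rw [ha, hb]; ring] at hd
    rw [hc0]
    exact mul_le_mul_of_nonneg_left hd (sq_nonneg _)
  -- sum of squared slopes
  have hSnn : ∀ i, (0:ℝ) ≤ 2*μ^2*c1*slopeS n u μ i^2 := fun i =>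
    mul_nonneg (mul_nonneg (by positivity) hc1pos.le) (sq_nonneg _)
  have upper : gagliardoSq θ n (fun x => linInterp n u x ^ μ)
      ≤ 12 * μ^2 * c1 * ∑ i ∈ Finset.range (n+1), slopeS n u μ i ^ 2 := by
    have step : gagliardoSq θ n (fun x => linInterp n u x ^ μ)
        ≤ ∑ i ∈ Finset.range (n+1), ∑ j ∈ Finset.range (n+1),
            ((if i ≤ j + 1 ∧ j ≤ i + 1 then 2*μ^2*c1*slopeS n u μ i^2 else 0)
             + (if i ≤ j + 1 ∧ j ≤ i + 1 then 2*μ^2*c1*slopeS n u μ j^2 else 0)) := by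
      unfold gagliardoSq
      apply Finset.sum_le_sum; intro i _
      apply Finset.sum_le_sum; intro j _
      split_ifs with hij
      · refine le_trans (claimU i j hij.1 hij.2) ?_
        nlinarith [mul_nonneg (mul_nonneg (sq_nonneg μ) hc1pos.le)
          (sq_nonneg (slopeS n u μ i - slopeS n u μ j))]
      · simp
    refine le_trans step ?_
    rw [show (∑ i ∈ Finset.range (n+1), ∑ j ∈ Finset.range (n+1),
            ((if i ≤ j + 1 ∧ j ≤ i + 1 then 2*μ^2*c1*slopeS n u μ i^2 else 0)
             + (if i ≤ j + 1 ∧ j ≤ i + 1 then 2*μ^2*c1*slopeS n u μ j^2 else 0)))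
        = (∑ i ∈ Finset.range (n+1), ∑ j ∈ Finset.range (n+1),
            (if i ≤ j + 1 ∧ j ≤ i + 1 then 2*μ^2*c1*slopeS n u μ i^2 else 0))
          + (∑ i ∈ Finset.range (n+1), ∑ j ∈ Finset.range (n+1),
            (if i ≤ j + 1 ∧ j ≤ i + 1 then 2*μ^2*c1*slopeS n u μ j^2 else 0)) from by
      rw [← Finset.sum_add_distrib]
      exact Finset.sum_congr rfl fun i _ => by rw [← Finset.sum_add_distrib]]
    have hA : (∑ i ∈ Finset.range (n+1), ∑ j ∈ Finset.range (n+1),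
          (if i ≤ j + 1 ∧ j ≤ i + 1 then 2*μ^2*c1*slopeS n u μ i^2 else 0))
        ≤ ∑ i ∈ Finset.range (n+1), 3*(2*μ^2*c1*slopeS n u μ i^2) :=
      Finset.sum_le_sum fun i _ =>
        aux_sum_ite_le i (fun j => i ≤ j + 1 ∧ j ≤ i + 1) (fun k hk => hk) (hSnn i)
    have hB : (∑ i ∈ Finset.range (n+1), ∑ j ∈ Finset.range (n+1),
          (if i ≤ j + 1 ∧ j ≤ i + 1 then 2*μ^2*c1*slopeS n u μ j^2 else 0))
        ≤ ∑ j ∈ Finset.range (n+1), 3*(2*μ^2*c1*slopeS n u μ j^2) := by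
      rw [Finset.sum_comm]
      exact Finset.sum_le_sum fun j _ =>
        aux_sum_ite_le j (fun i => i ≤ j + 1 ∧ j ≤ i + 1) (fun k hk => ⟨hk.2, hk.1⟩) (hSnn j)
    calc _ ≤ (∑ i ∈ Finset.range (n+1), 3*(2*μ^2*c1*slopeS n u μ i^2))
          + (∑ j ∈ Finset.range (n+1), 3*(2*μ^2*c1*slopeS n u μ j^2)) := add_le_add hA hB
      _ = 12 * μ^2 * c1 * ∑ i ∈ Finset.range (n+1), slopeS n u μ i ^ 2 := by
          rw [← Finset.sum_add_distrib, Finset.mul_sum]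
          exact Finset.sum_congr rfl fun i _ => by ring
  have lower : c0 * (∑ i ∈ Finset.range (n+1), slopeS n u μ i ^ 2)
      ≤ gagliardoSq θ n (linInterp n fun i => u i ^ μ) := by
    unfold gagliardoSq
    have hterm_nn : ∀ i j : ℕ, (0:ℝ) ≤
        (if i ≤ j + 1 ∧ j ≤ i + 1 then
          ∫ x in Set.Icc ((i:ℝ)/((n:ℝ)+1)) (((i:ℝ)+1)/((n:ℝ)+1)),
            ∫ y in Set.Icc ((j:ℝ)/((n:ℝ)+1)) (((j:ℝ)+1)/((n:ℝ)+1)),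
              |(linInterp n fun k => u k ^ μ) x - (linInterp n fun k => u k ^ μ) y| ^ 2
                / |x - y| ^ (1 + 2*θ)
        else 0) := by
      intro i j
      split_ifs
      · exact integral_nonneg fun x => integral_nonneg fun y => by positivity
      · exact le_refl 0
    calc c0 * (∑ i ∈ Finset.range (n+1), slopeS n u μ i ^ 2)
        = ∑ i ∈ Finset.range (n+1), slopeS n u μ i ^ 2 * c0 := by
          rw [Finset.mul_sum]
          exact Finset.sum_congr rfl fun i _ => by ring
      _ ≤ _ := by
          apply Finset.sum_le_sum
          intro i hi
          have h2 : (if i ≤ i + 1 ∧ i ≤ i + 1 then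
              (∫ x in Set.Icc ((i:ℝ)/((n:ℝ)+1)) (((i:ℝ)+1)/((n:ℝ)+1)),
                ∫ y in Set.Icc ((i:ℝ)/((n:ℝ)+1)) (((i:ℝ)+1)/((n:ℝ)+1)),
                  |(linInterp n fun k => u k ^ μ) x - (linInterp n fun k => u k ^ μ) y| ^ 2
                    / |x - y| ^ (1 + 2*θ)) else 0)
              = (∫ x in Set.Icc ((i:ℝ)/((n:ℝ)+1)) (((i:ℝ)+1)/((n:ℝ)+1)),
                ∫ y in Set.Icc ((i:ℝ)/((n:ℝ)+1)) (((i:ℝ)+1)/((n:ℝ)+1)),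
                  |(linInterp n fun k => u k ^ μ) x - (linInterp n fun k => u k ^ μ) y| ^ 2
                    / |x - y| ^ (1 + 2*θ)) := if_pos ⟨Nat.le_succ i, Nat.le_succ i⟩
          calc slopeS n u μ i ^ 2 * c0 ≤ _ := claimD i
            _ = _ := h2.symm
            _ ≤ _ := Finset.single_le_sum (fun j _ => hterm_nn i j) hi
  have hratio : 12 * c1 ≤ 784 * c0 := by
    rw [hc1, hc0]
    set E : ℝ := ((1/((n:ℝ)+1))/2) ^ (q+1) with hE
    have hEpos : 0 < E := by rw [hE]; positivity
    have h4 : ((2:ℝ)/((n:ℝ)+1)) = 4 * ((1/((n:ℝ)+1))/2) := by ring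
    rw [h4, Real.mul_rpow (by norm_num) (by positivity), ← hE]
    have h16 : (4:ℝ) ^ (q+1) ≤ 16 := by
      have h1 : (4:ℝ) ^ (q+1) ≤ (4:ℝ) ^ (2:ℝ) :=
        Real.rpow_le_rpow_of_exponent_le (by norm_num) (by rw [hqdef]; linarith)
      have h2 : (4:ℝ) ^ (2:ℝ) = 16 := by
        rw [show (2:ℝ) = ((2:ℕ):ℝ) by norm_num, Real.rpow_natCast]; norm_num
      linarith
    have e1 : 12 * (2 * ((4:ℝ)^(q+1) * E) / (q+1) * (1/((n:ℝ)+1)))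
        = (24 * (4:ℝ)^(q+1)) * (E / (q+1) * (1/((n:ℝ)+1))) := by ring
    have e2 : (784:ℝ) * (E / (q+1) * ((1/((n:ℝ)+1))/2))
        = 392 * (E / (q+1) * (1/((n:ℝ)+1))) := by ring
    rw [e1, show (784:ℝ) * (E / (q+1) * ((1/((n:ℝ)+1))/2)) = 392 * (E / (q+1) * (1/((n:ℝ)+1))) from e2]
    exact mul_le_mul_of_nonneg_right (by linarith)
      (mul_nonneg (div_nonneg hEpos.le hq1.le) (by positivity))
  have main2 : gagliardoSq θ n (fun x => linInterp n u x ^ μ)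
      ≤ (28*μ)^2 * gagliardoSq θ n (linInterp n fun i => u i ^ μ) := by
    have hSignn : (0:ℝ) ≤ ∑ i ∈ Finset.range (n+1), slopeS n u μ i ^ 2 :=
      Finset.sum_nonneg fun i _ => sq_nonneg _
    have h1 : 12 * μ^2 * c1 * (∑ i ∈ Finset.range (n+1), slopeS n u μ i ^ 2)
        ≤ 784 * μ^2 * c0 * (∑ i ∈ Finset.range (n+1), slopeS n u μ i ^ 2) := by
      have := mul_le_mul_of_nonneg_right hratio hSignn
      nlinarith [sq_nonneg μ]
    have h2 : 784 * μ^2 * (c0 * (∑ i ∈ Finset.range (n+1), slopeS n u μ i ^ 2))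
        ≤ 784 * μ^2 * gagliardoSq θ n (linInterp n fun i => u i ^ μ) :=
      mul_le_mul_of_nonneg_left lower (by positivity)
    calc gagliardoSq θ n (fun x => linInterp n u x ^ μ)
        ≤ 12*μ^2*c1* (∑ i ∈ Finset.range (n+1), slopeS n u μ i ^ 2) := upper
      _ ≤ 784*μ^2*c0* (∑ i ∈ Finset.range (n+1), slopeS n u μ i ^ 2) := h1
      _ = 784*μ^2* (c0 * (∑ i ∈ Finset.range (n+1), slopeS n u μ i ^ 2)) := by ring
      _ ≤ 784*μ^2* gagliardoSq θ n (linInterp n fun i => u i ^ μ) := h2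
      _ = (28*μ)^2 * gagliardoSq θ n (linInterp n fun i => u i ^ μ) := by ring
  unfold gagliardo
  calc Real.sqrt (gagliardoSq θ n (fun x => linInterp n u x ^ μ))
      ≤ Real.sqrt ((28*μ)^2 * gagliardoSq θ n (linInterp n fun i => u i ^ μ)) :=
        Real.sqrt_le_sqrt main2
    _ = 28*μ * Real.sqrt (gagliardoSq θ n (linInterp n fun i => u i ^ μ)) := by
        rw [Real.sqrt_mul (sq_nonneg _), Real.sqrt_sq (by linarith : (0:ℝ) ≤ 28*μ)]
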